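/- Let G act on a measure space (Ω, ν) by measure-preserving transformations of the form β_g(ω, t) = (σ_g ω, t + c(g⁻¹, ω)) on Ω₀ × ℝ with ν = μ ⊗ λ, where μ is G-invariant. If c is a measurable cocycle such that for μ-a.e. ω, |c(g_n, ω)| → ∞ for every sequence g_n → ∞, and there is a uniform integrable bound, then for ξ = 1 ⊗ h with h(t) = e^{−t²}, the matrix coefficient ⟨π(g_n)ξ, ξ⟩ of the Koopman representation tends to 0. -/
import Mathlib


open MeasureTheory Filter
open scoped Topology

lemma gauss_key (a : ℝ) :
    ∫ t : ℝ, Real.exp (-(t + a) ^ 2) * Real.exp (-t ^ 2)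
      = Real.sqrt (Real.pi / 2) * Real.exp (-a ^ 2 / 2) := by
  have h : ∀ t : ℝ, Real.exp (-(t + a) ^ 2) * Real.exp (-t ^ 2)
      = Real.exp (-(2:ℝ) * (t + a / 2) ^ 2) * Real.exp (-a ^ 2 / 2) := by
    intro t
    rw [← Real.exp_add, ← Real.exp_add]
    ring_nf
  simp_rw [h]
  rw [integral_mul_const,
    integral_add_right_eq_self (fun t => Real.exp (-(2:ℝ) * t ^ 2)) (a / 2),
    integral_gaussian]

/-- Skew-product setting: `G` acts on a probability space `(Ω₀, μ)` preserving `μ`, with a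
measurable real cocycle `c` (so `β_g(ω,t) = (g•ω, t + c(g⁻¹,ω))` preserves `μ ⊗ λ`).  If
along a sequence `gₙ → ∞` one has `|c(gₙ, ω)| → ∞` for `μ`-a.e. `ω`, and the inner
integrals admit a uniform integrable bound, then the matrix coefficient
`⟨π(gₙ)ξ, ξ⟩ = ∫_Ω ∫_ℝ e^{−(t + c(gₙ,ω))²} e^{−t²} dt dμ(ω)` of the Koopman
representation at `ξ = 1 ⊗ h`, `h(t) = e^{−t²}`, tends to `0`. -/
theorem koopman_coefficient_skew_product_tendsto_zero
    {G Ω₀ : Type*} [Group G] [MeasurableSpace Ω₀] (μ : Measure Ω₀)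
    [IsProbabilityMeasure μ] [MulAction G Ω₀]
    (hmeas : ∀ g : G, Measurable fun ω : Ω₀ => g • ω)
    (hpres : ∀ g : G, MeasurePreserving (fun ω : Ω₀ => g • ω) μ μ)
    (c : G → Ω₀ → ℝ) (hc : ∀ g, Measurable (c g))
    (hcoc : ∀ g h ω, c (g * h) ω = c g ω + c h (g⁻¹ • ω))
    (g : ℕ → G)
    (hproper : ∀ᵐ ω ∂μ, Tendsto (fun n => |c (g n) ω|) atTop atTop)
    (hbound : ∃ b : Ω₀ → ℝ, Integrable b μ ∧ ∀ n, ∀ᵐ ω ∂μ,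
      |∫ t : ℝ, Real.exp (-(t + c (g n) ω) ^ 2) * Real.exp (-t ^ 2)| ≤ b ω) :
    Tendsto
      (fun n => ∫ ω, (∫ t : ℝ, Real.exp (-(t + c (g n) ω) ^ 2) * Real.exp (-t ^ 2)) ∂μ)
      atTop (𝓝 0) := by
  simp_rw [gauss_key]
  have h0 : (0 : ℝ) = ∫ _ω, (0 : ℝ) ∂μ := by simp
  rw [h0]
  apply tendsto_integral_of_dominated_convergence
    (bound := fun _ => Real.sqrt (Real.pi / 2))
  · intro n
    exact (measurable_const.mul
      (((((hc (g n)).pow_const 2).neg).div_const 2).exp)).aestronglyMeasurable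
  · exact integrable_const _
  · intro n
    filter_upwards with ω
    have h1 : Real.exp (-(c (g n) ω) ^ 2 / 2) ≤ 1 := by
      apply Real.exp_le_one_iff.mpr
      nlinarith [sq_nonneg (c (g n) ω)]
    have h2 : (0:ℝ) ≤ Real.sqrt (Real.pi / 2) := Real.sqrt_nonneg _
    rw [Real.norm_eq_abs, abs_of_nonneg (by positivity)]
    nlinarith [Real.exp_pos (-(c (g n) ω) ^ 2 / 2)]
  · filter_upwards [hproper] with ω hω
    have h1 : Tendsto (fun n => (c (g n) ω) ^ 2 / 2) atTop atTop := by
      apply Tendsto.atTop_div_const (by norm_num)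
      have := (tendsto_pow_atTop (n := 2) (by norm_num)).comp hω
      simpa [Function.comp_def, sq_abs] using this
    have h2 : Tendsto (fun n => Real.exp (-(c (g n) ω) ^ 2 / 2)) atTop (𝓝 0) := by
      have := Real.tendsto_exp_neg_atTop_nhds_zero.comp h1
      simpa [Function.comp_def, neg_div] using this
    simpa using h2.const_mul (Real.sqrt (Real.pi / 2))
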